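/- arXiv:1611.06082 — 3 statements merged into one kernel-verified Lean document; each statement's English description precedes it below -/
import Mathlib

section
/- Let L/K be a degree 2 Galois extension with generator σ and Δ = {a·σ(a) : a ∈ L}. If Δ₂ = Δ (sums of two elements of Δ lie in Δ), then for any e ≠ f in L and any a, b in the Δ-convex hull of {e, f}, the Δ-convex hull of {a, b} is contained in the Δ-convex hull of {e, f}. -/
/-- Let L/K be a degree 2 Galois extension with generator σ and
Δ = {a·σ(a) : a ∈ L}. If Δ₂ = Δ (sums of two elements of Δ lie in Δ), then for any
e ≠ f in L and any a, b in the Δ-convex hull of {e, f}, the Δ-convex hull of {a, b}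
is contained in the Δ-convex hull of {e, f}. -/
theorem stmt9 (K L : Type*) [Field K] [Field L] [Algebra K L]
    [IsGalois K L] (h2 : Module.finrank K L = 2)
    (σ : L ≃ₐ[K] L) (hσ : σ ≠ AlgEquiv.refl)
    (Δ : Set L) (hΔ : Δ = {x : L | ∃ a : L, x = a * σ a})
    (hΔ2 : ∀ x ∈ Δ, ∀ y ∈ Δ, x + y ∈ Δ)
    (hull : L → L → Set L)
    (hhull : ∀ e f : L, hull e f = {x : L | ∃ t : L, t ∈ Δ ∧ (1 - t) ∈ Δ ∧ x = t * e + (1 - t) * f})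
    (e f : L) (hef : e ≠ f)
    (a b : L) (ha : a ∈ hull e f) (hb : b ∈ hull e f) :
    hull a b ⊆ hull e f := by
  have hmul : ∀ x ∈ Δ, ∀ y ∈ Δ, x * y ∈ Δ := by
    intro x hx y hy
    rw [hΔ] at hx hy ⊢
    obtain ⟨p, rfl⟩ := hx
    obtain ⟨q, rfl⟩ := hy
    exact ⟨p * q, by simp [map_mul]; ring⟩
  rw [hhull] at ha hb
  obtain ⟨s, hs, hs', rfl⟩ := ha
  obtain ⟨u, hu, hu', rfl⟩ := hb
  intro x hx
  rw [hhull] at hx ⊢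
  obtain ⟨t, ht, ht', rfl⟩ := hx
  refine ⟨t * s + (1 - t) * u, hΔ2 _ (hmul _ ht _ hs) _ (hmul _ ht' _ hu), ?_, by ring⟩
  have : 1 - (t * s + (1 - t) * u) = t * (1 - s) + (1 - t) * (1 - u) := by ring
  rw [this]
  exact hΔ2 _ (hmul _ ht _ hs') _ (hmul _ ht' _ hu')
end

section
/- Let L/K be a degree 2 Galois extension with generator σ, form ⟨,⟩ on Lⁿ definite up to n and Δₙ = Δ. Given linearly independent w₁,...,wₘ ∈ Lⁿ, there exists an orthonormal family f₁,...,fₙ (⟨fᵢ,fᵢ⟩ = 1, ⟨fᵢ,fⱼ⟩ = 0 for i ≠ j) such that f₁,...,fₘ span the span of w₁,...,wₘ. -/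
open Submodule Set

section Aux

variable {L : Type*} [Field L] {n : ℕ}

/-- The sesquilinear form. -/
def form (σ : L →+* L) (u v : Fin n → L) : L := ∑ k, σ (u k) * v k

lemma form_sub_left (σ : L →+* L) (u v w : Fin n → L) :
    form σ (u - v) w = form σ u w - form σ v w := by
  simp [form, sub_mul, Finset.sum_sub_distrib]

lemma form_sub_right (σ : L →+* L) (u v w : Fin n → L) :
    form σ u (v - w) = form σ u v - form σ u w := by
  simp [form, mul_sub, Finset.sum_sub_distrib]

lemma form_smul_left (σ : L →+* L) (c : L) (u v : Fin n → L) :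
    form σ (c • u) v = σ c * form σ u v := by
  simp [form, Finset.mul_sum, mul_assoc]

lemma form_smul_right (σ : L →+* L) (c : L) (u v : Fin n → L) :
    form σ u (c • v) = c * form σ u v := by
  simp [form, Finset.mul_sum]; ring_nf
  exact Finset.sum_congr rfl fun k _ => by ring

lemma form_sum_right {ι : Type*} (σ : L →+* L) (s : Finset ι) (u : Fin n → L)
    (v : ι → Fin n → L) :
    form σ u (∑ j ∈ s, v j) = ∑ j ∈ s, form σ u (v j) := by
  simp only [form, Finset.sum_apply, Finset.mul_sum]
  exact Finset.sum_comm

lemma form_conj (σ : L →+* L) (hσ2 : ∀ x, σ (σ x) = x) (u v : Fin n → L) :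
    σ (form σ u v) = form σ v u := by
  simp only [form, map_sum, map_mul, hσ2]
  exact Finset.sum_congr rfl fun k _ => mul_comm _ _

/-- Gram-Schmidt process (without normalization). -/
noncomputable def gsAux (B : (Fin n → L) → (Fin n → L) → L) (b : ℕ → Fin n → L) :
    ℕ → Fin n → L
  | i => b i - ∑ j ∈ (Finset.range i).attach,
      (B (gsAux B b j) (b i) / B (gsAux B b j) (gsAux B b j)) • gsAux B b j
termination_by i => i
decreasing_by exact Finset.mem_range.mp j.2

lemma gsAux_def (B : (Fin n → L) → (Fin n → L) → L) (b : ℕ → Fin n → L) (i : ℕ) :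
    gsAux B b i = b i - ∑ j ∈ Finset.range i,
      (B (gsAux B b j) (b i) / B (gsAux B b j) (gsAux B b j)) • gsAux B b j := by
  rw [gsAux]
  congr 1
  exact Finset.sum_attach (Finset.range i)
    (fun j => (B (gsAux B b j) (b i) / B (gsAux B b j) (gsAux B b j)) • gsAux B b j)

lemma range_fin_subset (u : ℕ → Fin n → L) {i j : ℕ} (h : i ≤ j) :
    (Set.range fun k : Fin i => u ↑k) ⊆ Set.range fun k : Fin j => u ↑k := by
  rintro x ⟨k, rfl⟩
  exact ⟨⟨k, lt_of_lt_of_le k.2 h⟩, rfl⟩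

lemma gs_mem (B : (Fin n → L) → (Fin n → L) → L) (b : ℕ → Fin n → L) (i : ℕ) :
    gsAux B b i ∈ span L (Set.range fun j : Fin (i + 1) => b ↑j) := by
  induction i using Nat.strong_induction_on with
  | _ i IH =>
    rw [gsAux_def]
    apply sub_mem
    · exact subset_span ⟨⟨i, Nat.lt_succ_self i⟩, rfl⟩
    · apply sum_mem
      intro j hj
      have hji : j < i := Finset.mem_range.mp hj
      exact Submodule.smul_mem _ _ <| span_mono (range_fin_subset b (Nat.succ_le_succ (le_of_lt hji))) (IH j hji)

lemma b_mem (B : (Fin n → L) → (Fin n → L) → L) (b : ℕ → Fin n → L) (i : ℕ) :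
    b i ∈ span L (Set.range fun j : Fin (i + 1) => gsAux B b ↑j) := by
  have : b i = gsAux B b i + ∑ j ∈ Finset.range i,
      (B (gsAux B b j) (b i) / B (gsAux B b j) (gsAux B b j)) • gsAux B b j := by
    rw [gsAux_def]; ring
  rw [this]
  apply add_mem
  · exact subset_span ⟨⟨i, Nat.lt_succ_self i⟩, rfl⟩
  · apply sum_mem
    intro j hj
    have hji : j < i := Finset.mem_range.mp hj
    exact Submodule.smul_mem _ _ <| subset_span ⟨⟨j, Nat.lt_succ_of_lt hji⟩, rfl⟩

lemma gs_span (B : (Fin n → L) → (Fin n → L) → L) (b : ℕ → Fin n → L) (i : ℕ) :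
    span L (Set.range fun j : Fin i => gsAux B b ↑j)
      = span L (Set.range fun j : Fin i => b ↑j) := by
  apply le_antisymm
  · rw [span_le]
    rintro x ⟨j, rfl⟩
    exact span_mono (range_fin_subset b j.2) (gs_mem B b ↑j)
  · rw [span_le]
    rintro x ⟨j, rfl⟩
    exact span_mono (range_fin_subset _ j.2) (b_mem B b ↑j)

lemma gs_orth (σ : L →+* L) (hσ2 : ∀ x, σ (σ x) = x) (b : ℕ → Fin n → L) (N : ℕ)
    (hnz : ∀ j, j < N → form σ (gsAux (form σ) b j) (gsAux (form σ) b j) ≠ 0) :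
    ∀ i, i ≤ N → ∀ j, j < i → form σ (gsAux (form σ) b j) (gsAux (form σ) b i) = 0 := by
  set g := gsAux (form σ) b with hg
  intro i
  induction i using Nat.strong_induction_on with
  | _ i IH =>
    intro hiN j hji
    have hgi : g i = b i - ∑ k ∈ Finset.range i,
        (form σ (g k) (b i) / form σ (g k) (g k)) • g k := gsAux_def _ _ i
    rw [hgi, form_sub_right, form_sum_right]
    have hsum : ∑ k ∈ Finset.range i, form σ (g j)
        ((form σ (g k) (b i) / form σ (g k) (g k)) • g k) = form σ (g j) (b i) := by
      rw [Finset.sum_eq_single j]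
      · rw [form_smul_right, div_mul_cancel₀]
        exact hnz j (lt_of_lt_of_le hji hiN)
      · intro k hk hkj
        rw [form_smul_right]
        have : form σ (g j) (g k) = 0 := by
          rcases lt_or_gt_of_ne hkj with h | h
          · rw [← form_conj σ hσ2, IH j hji (le_of_lt (lt_of_lt_of_le hji hiN)) k h,
              map_zero]
          · exact IH k (Finset.mem_range.mp hk) (le_of_lt
              (lt_of_lt_of_le (Finset.mem_range.mp hk) hiN)) j h
        rw [this, mul_zero]
      · intro h
        exact absurd (Finset.mem_range.mpr hji) h
    rw [hsum, sub_self]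

lemma span_smul_range {ι : Type*} (c : ι → L) (u : ι → Fin n → L) (hc : ∀ i, c i ≠ 0) :
    span L (Set.range fun i => c i • u i) = span L (Set.range u) := by
  apply le_antisymm
  · rw [span_le]
    rintro x ⟨i, rfl⟩
    exact Submodule.smul_mem _ _ (subset_span ⟨i, rfl⟩)
  · rw [span_le]
    rintro x ⟨i, rfl⟩
    have : u i = (c i)⁻¹ • (c i • u i) := by rw [inv_smul_smul₀ (hc i)]
    rw [this]
    exact Submodule.smul_mem _ _ (subset_span ⟨i, rfl⟩)

lemma extend_li {m k : ℕ} (hmk : m ≤ k) (hkn : k ≤ n) (w : Fin m → Fin n → L)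
    (hw : LinearIndependent L w) :
    ∃ b : Fin k → Fin n → L, LinearIndependent L b ∧
      ∀ i : Fin m, b (Fin.castLE hmk i) = w i := by
  induction k, hmk using Nat.le_induction with
  | base =>
    exact ⟨w, hw, fun i => by simp⟩
  | succ k hmk IH =>
    obtain ⟨b, hb, hbw⟩ := IH (le_of_lt (Nat.lt_of_succ_le hkn))
    have hne : span L (Set.range b) ≠ ⊤ := by
      intro htop
      have : Module.finrank L (Fin n → L) = Fintype.card (Fin k) :=
        Module.finrank_eq_card_basis (Module.Basis.mk hb (le_of_eq htop.symm))
      rw [Module.finrank_fin_fun, Fintype.card_fin] at this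
      omega
    have : ∃ x, x ∉ span L (Set.range b) := by
      by_contra h
      push_neg at h
      exact hne (eq_top_iff'.mpr h)
    obtain ⟨x, hx⟩ := this
    refine ⟨Fin.snoc b x, linearIndependent_fin_snoc.mpr ⟨hb, hx⟩, ?_⟩
    intro i
    have hcast : Fin.castLE (le_trans hmk (Nat.le_succ k)) i
        = Fin.castSucc (Fin.castLE hmk i) := by
      apply Fin.ext; simp
    rw [hcast, Fin.snoc_castSucc, hbw]

end Aux


/-- Orthonormalization. Let L/K be a degree 2 Galois extension with
generator σ, the form ⟨,⟩ on Lⁿ definite up to n, and Δₙ = Δ (every ⟨u,u⟩ is of the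
form a·σ(a)). Given linearly independent w₁,...,wₘ ∈ Lⁿ (m ≤ n), there exists an
orthonormal family f₁,...,fₙ such that f₁,...,fₘ span the span of w₁,...,wₘ. -/
theorem stmt11 (K L : Type*) [Field K] [Field L] [Algebra K L]
    [IsGalois K L] (h2 : Module.finrank K L = 2)
    (σ : L ≃ₐ[K] L) (hσ : σ ≠ AlgEquiv.refl)
    (n m : ℕ) (hmn : m ≤ n)
    (hdef : ∀ u : Fin n → L, u ≠ 0 → ∑ i, σ (u i) * u i ≠ 0)
    (hΔ : ∀ u : Fin n → L, ∃ a : L, ∑ i, σ (u i) * u i = a * σ a)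
    (w : Fin m → (Fin n → L)) (hw : LinearIndependent L w) :
    ∃ f : Fin n → (Fin n → L),
      (∀ i, ∑ k, σ (f i k) * f i k = 1) ∧
      (∀ i j, i ≠ j → ∑ k, σ (f i k) * f j k = 0) ∧
      Submodule.span L (Set.range (fun i : Fin m => f (Fin.castLE hmn i)))
        = Submodule.span L (Set.range w) := by
  classical
  have hfd : FiniteDimensional K L :=
    Module.finite_of_finrank_pos (by rw [h2]; norm_num)
  have hcard : Fintype.card (L ≃ₐ[K] L) = 2 := by
    rw [← Nat.card_eq_fintype_card, IsGalois.card_aut_eq_finrank, h2]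
  have hσ2 : ∀ x : L, σ (σ x) = x := by
    have h : σ ^ 2 = 1 := by rw [← hcard]; exact pow_card_eq_one
    rw [pow_two] at h
    intro x
    have := DFunLike.congr_fun h x
    simpa using this
  set σ' : L →+* L := RingHomClass.toRingHom σ with hσ'def
  have hco : ∀ x : L, σ' x = σ x := fun _ => rfl
  have hσ2' : ∀ x : L, σ' (σ' x) = x := hσ2
  have hdef' : ∀ u : Fin n → L, u ≠ 0 → form σ' u u ≠ 0 := hdef
  obtain ⟨b, hb, hbw⟩ := extend_li hmn (le_refl n) w hw
  set bext : ℕ → Fin n → L := fun i => if h : i < n then b ⟨i, h⟩ else 0 with hbextdef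
  set g : ℕ → Fin n → L := gsAux (form σ') bext with hg
  have hgdef : ∀ i, g i = bext i - ∑ j ∈ Finset.range i,
      (form σ' (g j) (bext i) / form σ' (g j) (g j)) • g j := fun i => gsAux_def _ _ i
  have hbval : ∀ (i : ℕ) (h : i < n), bext i = b ⟨i, h⟩ := by
    intro i h
    rw [hbextdef]
    exact dif_pos h
  have hbw' : ∀ j : Fin m, bext ↑j = w j := by
    intro j
    have hjn : (j : ℕ) < n := lt_of_lt_of_le j.2 hmn
    have h1 : bext ↑j = b ⟨↑j, hjn⟩ := hbval _ hjn
    rw [h1, ← hbw j]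
    congr 1
  have gne : ∀ i, i < n → g i ≠ 0 := by
    intro i hi hgz
    have hsum : bext i = ∑ j ∈ Finset.range i,
        (form σ' (g j) (bext i) / form σ' (g j) (g j)) • g j := by
      have := hgdef i
      rw [hgz] at this
      exact sub_eq_zero.mp this.symm
    have hmem : bext i ∈ Submodule.span L (Set.range fun j : Fin i => g ↑j) := by
      rw [hsum]
      apply sum_mem
      intro j hj
      exact Submodule.smul_mem _ _
        (Submodule.subset_span ⟨⟨j, Finset.mem_range.mp hj⟩, rfl⟩)
    have h2 := gs_span (form σ') bext i
    rw [← hg] at h2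
    rw [h2] at hmem
    have hsub : (Set.range fun j : Fin i => bext ↑j) ⊆ b '' {t : Fin n | (t : ℕ) < i} := by
      rintro x ⟨j, rfl⟩
      have hjn : (j : ℕ) < n := lt_trans j.2 hi
      exact ⟨⟨↑j, hjn⟩, j.2, (hbval _ hjn).symm⟩
    have hmem2 : b ⟨i, hi⟩ ∈ Submodule.span L (b '' {t : Fin n | (t : ℕ) < i}) := by
      have hbi : bext i = b ⟨i, hi⟩ := hbval _ hi
      rw [hbi] at hmem
      exact Submodule.span_mono hsub hmem
    exact hb.notMem_span_image (by simp : (⟨i, hi⟩ : Fin n) ∉ {t : Fin n | (t : ℕ) < i})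
      hmem2
  have hnz : ∀ j, j < n → form σ' (g j) (g j) ≠ 0 := fun j hj => hdef' _ (gne j hj)
  have horth := gs_orth σ' hσ2' bext n hnz
  rw [← hg] at horth
  have horth' : ∀ i j : ℕ, i < n → j < n → i ≠ j → form σ' (g i) (g j) = 0 := by
    intro i j hi hj hij
    rcases lt_or_gt_of_ne hij with h | h
    · exact horth j (le_of_lt hj) i h
    · rw [← form_conj σ' hσ2' (g j) (g i), horth i (le_of_lt hi) j h, map_zero]
  have hA : ∀ i : Fin n, ∃ a : L, a ≠ 0 ∧ form σ' (g ↑i) (g ↑i) = a * σ' a := by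
    intro i
    obtain ⟨a, ha⟩ := hΔ (g ↑i)
    have hfa : form σ' (g ↑i) (g ↑i) = a * σ' a := ha
    refine ⟨a, fun h0 => ?_, hfa⟩
    exact hnz ↑i i.2 (by rw [hfa, h0, zero_mul])
  choose a ha0 haa using hA
  refine ⟨fun i => (a i)⁻¹ • g ↑i, ?_, ?_, ?_⟩
  · intro i
    show form σ' ((a i)⁻¹ • g ↑i) ((a i)⁻¹ • g ↑i) = 1
    rw [form_smul_left, form_smul_right, haa i, map_inv₀]
    have h1 : a i ≠ 0 := ha0 i
    have h2 : σ' (a i) ≠ 0 := fun h => h1 (σ'.injective (by rw [h, map_zero]))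
    field_simp
  · intro i j hij
    show form σ' ((a i)⁻¹ • g ↑i) ((a j)⁻¹ • g ↑j) = 0
    rw [form_smul_left, form_smul_right,
      horth' ↑i ↑j i.2 j.2 (fun h => hij (Fin.ext h))]
    ring
  · have h1 : (Set.range fun i : Fin m => (a (Fin.castLE hmn i))⁻¹ • g ↑(Fin.castLE hmn i))
        = Set.range fun i : Fin m => (a (Fin.castLE hmn i))⁻¹ • g ↑i := rfl
    rw [h1, span_smul_range (fun i : Fin m => (a (Fin.castLE hmn i))⁻¹)
      (fun i : Fin m => g ↑i) (fun i => inv_ne_zero (ha0 _))]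
    have h2 := gs_span (form σ') bext m
    rw [← hg] at h2
    rw [h2, show (fun j : Fin m => bext ↑j) = w from funext hbw']
end

section
/- Let L/K be a degree 2 Galois extension with generator σ, with ⟨,⟩ definite up to n. Let M ∈ Mₙ(L) have eigenvalues a ≠ b in L with eigenvectors u, v ∈ Lⁿ satisfying ⟨u,u⟩ ∈ Δ \ {0}, ⟨v,v⟩ ∈ Δ \ {0}, and ⟨u,v⟩ = 0. Then {t·a + (1−t)·b : t ∈ Δ ∩ (1−Δ)} ⊆ Num(M). -/
open Matrix

lemma stmt12_sum (n : ℕ) (K L : Type*) [Field K] [Field L] [Algebra K L]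
    (σ : L ≃ₐ[K] L)
    (u v : Fin n → L) (α β : L) (u' v' : Fin n → L) (γ δ : L) :
    ∑ i, σ ((α • u + β • v) i) * ((γ • u' + δ • v') i) =
      σ α * γ * ∑ i, σ (u i) * u' i + σ α * δ * ∑ i, σ (u i) * v' i +
      σ β * γ * ∑ i, σ (v i) * u' i + σ β * δ * ∑ i, σ (v i) * v' i := by
  simp only [Pi.add_apply, Pi.smul_apply, smul_eq_mul, map_add, _root_.map_mul,
    Finset.mul_sum, ← Finset.sum_add_distrib]
  apply Finset.sum_congr rfl
  intro i _
  ring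

/-- Theorem (part a). L/K degree 2 Galois with generator σ, form ⟨,⟩
definite up to n. Let M ∈ Mₙ(L) have eigenvalues a ≠ b in L with eigenvectors u, v
satisfying ⟨u,u⟩ ∈ Δ \ {0}, ⟨v,v⟩ ∈ Δ \ {0}, and ⟨u,v⟩ = 0. Then
{t·a + (1−t)·b : t ∈ Δ ∩ (1−Δ)} ⊆ Num(M). -/
theorem stmt12 (K L : Type*) [Field K] [Field L] [Algebra K L]
    [IsGalois K L] (h2 : Module.finrank K L = 2)
    (σ : L ≃ₐ[K] L) (hσ : σ ≠ AlgEquiv.refl)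
    (n : ℕ)
    (hdef : ∀ w : Fin n → L, w ≠ 0 → ∑ i, σ (w i) * w i ≠ 0)
    (M : Matrix (Fin n) (Fin n) L)
    (a b : L) (hab : a ≠ b)
    (u v : Fin n → L)
    (hMu : M.mulVec u = a • u) (hMv : M.mulVec v = b • v)
    (hu : ∃ e : L, ∑ i, σ (u i) * u i = e * σ e) (hu0 : ∑ i, σ (u i) * u i ≠ 0)
    (hv : ∃ e : L, ∑ i, σ (v i) * v i = e * σ e) (hv0 : ∑ i, σ (v i) * v i ≠ 0)
    (horth : ∑ i, σ (u i) * v i = 0) :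
    ∀ t : L, (∃ e : L, t = e * σ e) → (∃ e : L, 1 - t = e * σ e) →
      ∃ w : Fin n → L, (∑ i, σ (w i) * w i = 1) ∧
        ∑ i, σ (w i) * M.mulVec w i = t * a + (1 - t) * b := by
  have hfin : FiniteDimensional K L := FiniteDimensional.of_finrank_pos (by omega)
  have hσ2 : ∀ x, σ (σ x) = x := by
    have hcard : Fintype.card (L ≃ₐ[K] L) = 2 := by
      rw [← Nat.card_eq_fintype_card, IsGalois.card_aut_eq_finrank, h2]
    intro x
    have h : σ ^ 2 = 1 := by rw [← hcard]; exact pow_card_eq_one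
    have := congrArg (fun f : L ≃ₐ[K] L => f x) h
    simpa [pow_two, AlgEquiv.mul_apply] using this
  have hvu : ∑ i, σ (v i) * u i = 0 := by
    have h := congrArg σ horth
    rw [map_sum, map_zero] at h
    rw [← h]
    apply Finset.sum_congr rfl
    intro i _
    rw [_root_.map_mul, hσ2, mul_comm]
  rintro t ⟨s, hs⟩ ⟨r, hr⟩
  obtain ⟨e, he⟩ := hu
  obtain ⟨f, hf⟩ := hv
  have he0 : e ≠ 0 := by rintro rfl; apply hu0; rw [he]; ring
  have hf0 : f ≠ 0 := by rintro rfl; apply hv0; rw [hf]; ring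
  have hσe : σ e ≠ 0 := fun h => he0 (σ.injective (by simp [h]))
  have hσf : σ f ≠ 0 := fun h => hf0 (σ.injective (by simp [h]))
  refine ⟨(s / σ e) • u + (r / σ f) • v, ?_, ?_⟩
  · rw [stmt12_sum n K L σ u v (s / σ e) (r / σ f) u v (s / σ e) (r / σ f)]
    simp only [map_div₀, hσ2, horth, hvu, he, hf, mul_zero, add_zero, zero_mul]
    field_simp
    linear_combination (-1 : L) * hs - hr
  · have hmul : M.mulVec ((s / σ e) • u + (r / σ f) • v) =
        ((s / σ e) * a) • u + ((r / σ f) * b) • v := by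
      rw [Matrix.mulVec_add, Matrix.mulVec_smul, Matrix.mulVec_smul, hMu, hMv,
        smul_smul, smul_smul]
    rw [hmul, stmt12_sum n K L σ u v (s / σ e) (r / σ f) u v (s / σ e * a) (r / σ f * b)]
    simp only [map_div₀, hσ2, horth, hvu, he, hf, mul_zero, add_zero, zero_mul]
    field_simp
    linear_combination (-a) * hs + (-b) * hr
end
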